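/- For all q ∈ ℕ and k ∈ ℕ, ε(2^k, q) = (-1)^{β(q mod 2^k)} · μ^{b}, where β is popcount and b = 1 if bit k of q is set and b = 0 otherwise; that is, multiplying a blade on the left by the 1-blade e_{k+1} introduces a sign of -1 for each lower-indexed vector factor of the blade, and a factor μ if e_{k+1} is itself a factor. -/

import Mathlib

/-- Number of 1-bits (popcount) of a natural number. -/
def popCount : ℕ → ℕ
  | 0 => 0
  | (n+1) => (n+1) % 2 + popCount ((n+1) / 2)
decreasing_by omega

/-- The Clifford twist with parameter `μ`. -/
def cliffordTwist (μ : ℤ) (p q : ℕ) : ℤ :=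
  if p = 0 ∧ q = 0 then 1
  else
    (if q % 2 = 1 then
      (if p % 2 = 1 then μ else 1) * (-1) ^ popCount (p / 2)
     else 1) * cliffordTwist μ (p / 2) (q / 2)
termination_by p + q
decreasing_by omega

lemma popCount_eq (n : ℕ) : popCount n = n % 2 + popCount (n / 2) := by
  cases n with
  | zero => simp [popCount]
  | succ m => rw [popCount]

lemma pc_pow (k : ℕ) : popCount (2^k) = 1 := by
  induction k with
  | zero => norm_num [popCount]
  | succ k ih =>
    rw [popCount_eq, pow_succ, Nat.mul_mod_left, Nat.mul_div_cancel _ (by norm_num)]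
    simpa using ih

lemma ct_zero (μ : ℤ) (m : ℕ) : cliffordTwist μ 0 m = 1 := by
  induction m using Nat.strong_induction_on with
  | _ m ih =>
    rw [cliffordTwist]
    rcases Nat.eq_zero_or_pos m with h | h
    · simp [h]
    · have hlt : m / 2 < m := Nat.div_lt_self h (by norm_num)
      simp [h.ne', ih _ hlt, popCount]

theorem stmt18 (μ : ℤ) (hμ : μ = 1 ∨ μ = -1) (k q : ℕ) :
    cliffordTwist μ (2^k) q =
      (-1) ^ popCount (q % 2^k) * μ ^ (if q.testBit k then 1 else 0) := by
  induction k generalizing q with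
  | zero =>
    rw [show (2:ℕ)^0 = 1 from rfl, cliffordTwist]
    simp only [Nat.mod_one, Nat.testBit_zero, mul_one]
    rcases Nat.eq_zero_or_pos q with h | h
    · simp [h, popCount, cliffordTwist]
    · have hq : ¬ (1 = 0 ∧ q = 0) := by omega
      rw [if_neg hq]
      rcases Nat.mod_two_eq_zero_or_one q with h2 | h2 <;>
        simp [h2, popCount, ct_zero]
  | succ k ih =>
    rw [cliffordTwist, if_neg (fun h => (Nat.pow_pos (n := k+1) two_pos).ne' h.1)]
    have h1 : (2:ℕ)^(k+1) % 2 = 0 := by rw [pow_succ]; exact Nat.mul_mod_left _ _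
    have h2 : (2:ℕ)^(k+1) / 2 = 2^k := by
      rw [pow_succ]; exact Nat.mul_div_cancel _ two_pos
    rw [h1, h2, ih, popCount_eq (q % 2^(k+1)),
      Nat.mod_mod_of_dvd q (dvd_pow_self 2 (Nat.succ_ne_zero k)),
      show (q % 2^(k+1)) / 2 = (q/2) % 2^k by
        rw [pow_succ']; exact Nat.mod_mul_right_div_self q 2 (2^k),
      Nat.testBit_add_one, pow_add, pc_pow]
    rcases Nat.mod_two_eq_zero_or_one q with h3 | h3 <;> simp [h3] <;> ring
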